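/- Let n ≥ 1 and let q_1, …, q_n be distinct points of ℝ² ≅ ℂ, all different from 0 and from a fixed point e with |e| = 1, and let α ≥ 0 and K21 < 0 be reals. Suppose for each i: 2*Σ_{j≠i} (q_j - q_i)/|q_j - q_i|² + α*q_i/|q_i|² - K21*(q_i - e)/|q_i - e|² = 0 (as vectors in ℝ²). Then Σ_{i=1}^{n} Re(K21*e/(q_i - e)) = -n*(n-1) + (α - K21)*n, where the quotient is taken in ℂ. -/

import Mathlib

open Finset in
theorem stmt_5 (n : ℕ) (hn : 1 ≤ n) (q : Fin n → ℂ) (hq : Function.Injective q)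
    (e : ℂ) (he : ‖e‖ = 1) (α K21 : ℝ) (hα : 0 ≤ α) (hK : K21 < 0)
    (h0 : ∀ i, q i ≠ 0) (hqe : ∀ i, q i ≠ e)
    (hloc : ∀ i, 2 * ∑ j ∈ univ.erase i, (q j - q i) / (Complex.normSq (q j - q i) : ℂ)
        + (α : ℂ) * q i / (Complex.normSq (q i) : ℂ)
        - (K21 : ℂ) * (q i - e) / (Complex.normSq (q i - e) : ℂ) = 0) :
    (∑ i, (K21 : ℂ) * e / (q i - e)).re
      = -((n : ℝ) * ((n : ℝ) - 1)) + (α - K21) * (n : ℝ) := by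
  have hne : ∀ i j : Fin n, j ≠ i → q j - q i ≠ 0 :=
    fun i j h => sub_ne_zero.mpr (fun hh => h (hq hh))
  have hqe' : ∀ i, q i - e ≠ 0 := fun i => sub_ne_zero.mpr (hqe i)
  have invconj : ∀ z : ℂ, ((starRingEnd ℂ) z)⁻¹ = z / (Complex.normSq z : ℂ) := by
    intro z
    rw [Complex.inv_def, Complex.normSq_conj, Complex.conj_conj, div_eq_mul_inv]
    norm_cast
  have key : ∀ i, 2 * ∑ j ∈ univ.erase i, (q j - q i)⁻¹
      + (α : ℂ) * (q i)⁻¹ - (K21 : ℂ) * (q i - e)⁻¹ = 0 := by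
    intro i
    have hc : (starRingEnd ℂ) (2 * ∑ j ∈ univ.erase i, (q j - q i)⁻¹
        + (α : ℂ) * (q i)⁻¹ - (K21 : ℂ) * (q i - e)⁻¹) = 0 := by
      rw [map_sub, map_add, map_mul, map_mul, map_mul, map_sum]
      simp only [map_inv₀, Complex.conj_ofReal, map_ofNat]
      simp only [invconj]
      rw [mul_div_assoc' (α : ℂ), mul_div_assoc' (K21 : ℂ)]
      exact hloc i
    rwa [starRingEnd_apply, star_eq_zero] at hc
  set A : ℂ := ∑ i, ∑ j ∈ univ.erase i, q i * (q j - q i)⁻¹ with hAdef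
  have swap : A = ∑ i, ∑ j ∈ univ.erase i, q j * (q i - q j)⁻¹ := by
    rw [hAdef, Finset.sum_comm' (t' := univ) (s' := fun y => univ.erase y)
      (by intro x y; simp [eq_comm])]
  have hcard : ∀ i : Fin n, (univ.erase i).card = n - 1 := by
    intro i; rw [Finset.card_erase_of_mem (mem_univ i), Finset.card_univ, Fintype.card_fin]
  have hAA : A + A = -((n : ℂ) * ((n : ℂ) - 1)) := by
    nth_rewrite 2 [swap]
    rw [hAdef, ← Finset.sum_add_distrib]
    have : ∀ i : Fin n, (∑ j ∈ univ.erase i, q i * (q j - q i)⁻¹)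
        + (∑ j ∈ univ.erase i, q j * (q i - q j)⁻¹) = -((n : ℂ) - 1) := by
      intro i
      rw [← Finset.sum_add_distrib]
      have : ∀ j ∈ univ.erase i, q i * (q j - q i)⁻¹ + q j * (q i - q j)⁻¹ = -1 := by
        intro j hj
        have hj' : q j - q i ≠ 0 := hne i j (Finset.ne_of_mem_erase hj)
        have hij : q i - q j ≠ 0 := hne j i (Ne.symm (Finset.ne_of_mem_erase hj))
        field_simp
        ring
      rw [Finset.sum_congr rfl this, Finset.sum_const, hcard i]
      have : ((n - 1 : ℕ) : ℂ) = (n : ℂ) - 1 := by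
        rw [Nat.cast_sub hn, Nat.cast_one]
      simp [this]
    rw [Finset.sum_congr rfl (fun i _ => this i), Finset.sum_const, Finset.card_univ,
      Fintype.card_fin]
    simp
    ring
  have expand : ∀ i : Fin n, q i * (2 * ∑ j ∈ univ.erase i, (q j - q i)⁻¹
      + (α : ℂ) * (q i)⁻¹ - (K21 : ℂ) * (q i - e)⁻¹)
      = 2 * ∑ j ∈ univ.erase i, q i * (q j - q i)⁻¹
        + (α : ℂ) - (K21 : ℂ) - (K21 : ℂ) * e * (q i - e)⁻¹ := by
    intro i
    have h1 : q i * ((α : ℂ) * (q i)⁻¹) = (α : ℂ) := by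
      field_simp [h0 i]
    have h2 : q i * ((K21 : ℂ) * (q i - e)⁻¹) = (K21 : ℂ) + (K21 : ℂ) * e * (q i - e)⁻¹ := by
      field_simp [hqe' i]
      ring
    rw [mul_sub, mul_add, h1, h2, mul_left_comm, Finset.mul_sum]
    ring
  have hsum : (0 : ℂ) = 2 * A + (n : ℂ) * (α : ℂ) - (n : ℂ) * (K21 : ℂ)
      - ∑ i, (K21 : ℂ) * e * (q i - e)⁻¹ := by
    have h0' : (0 : ℂ) = ∑ i, q i * (2 * ∑ j ∈ univ.erase i, (q j - q i)⁻¹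
        + (α : ℂ) * (q i)⁻¹ - (K21 : ℂ) * (q i - e)⁻¹) := by
      simp only [key, mul_zero, Finset.sum_const_zero]
    rw [h0', Finset.sum_congr rfl (fun i _ => expand i)]
    rw [Finset.sum_sub_distrib, Finset.sum_sub_distrib, Finset.sum_add_distrib,
      ← Finset.mul_sum, Finset.sum_const, Finset.sum_const, Finset.card_univ,
      Fintype.card_fin]
    push_cast
    ring
  have hfinal : (∑ i, (K21 : ℂ) * e / (q i - e))
      = ((-((n : ℝ) * ((n : ℝ) - 1)) + (α - K21) * (n : ℝ) : ℝ) : ℂ) := by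
    have h2A : 2 * A = -((n : ℂ) * ((n : ℂ) - 1)) := by rw [two_mul]; exact hAA
    simp only [div_eq_mul_inv]
    have := hsum
    rw [h2A] at this
    have h' : ∑ i, (K21 : ℂ) * e * (q i - e)⁻¹
        = -((n : ℂ) * ((n : ℂ) - 1)) + (n : ℂ) * (α : ℂ) - (n : ℂ) * (K21 : ℂ) := by
      linear_combination this
    rw [h']
    push_cast
    ring
  rw [hfinal, Complex.ofReal_re]
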